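/- A topological group G is Ramsey if and only if it is locally Ramsey at the identity: whenever lim_m g_{nm} = e for all n, there is an infinite I ⊆ ℕ such that the set {g_{nm} : n, m ∈ I, n < m} converges to e. -/

import Mathlib

open Filter Topology Set

/-- A countably infinite set converging to `x`: `x` is not in the set, and the set is
cofinitely contained in every neighborhood of `x`. -/
def ConvSeq {X : Type*} [TopologicalSpace X] (S : Set X) (x : X) : Prop :=
  S.Countable ∧ S.Infinite ∧ x ∉ S ∧ ∀ U ∈ nhds x, (S \ U).Finite

/-- A set converges to `x` in the weak sense: all but finitely many of its elements
are in every neighborhood of `x`. -/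
def SetConv {X : Type*} [TopologicalSpace X] (S : Set X) (x : X) : Prop :=
  ∀ U ∈ nhds x, (S \ U).Finite
/-- A topological space is Ramsey if whenever `lim_n lim_m x n m = a`, there is an infinite
`I ⊆ ℕ` such that for each neighborhood `U` of `a` there is `k` with
`{x n m : k < n < m, n, m ∈ I} ⊆ U`. -/
def RamseySpace (X : Type*) [TopologicalSpace X] : Prop :=
  ∀ (x : ℕ → ℕ → X) (y : ℕ → X) (a : X),
    (∀ n, Tendsto (x n) atTop (nhds (y n))) → Tendsto y atTop (nhds a) →
    ∃ I : Set ℕ, I.Infinite ∧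
      ∀ U ∈ nhds a, ∃ k, ∀ n ∈ I, ∀ m ∈ I, k < n → n < m → x n m ∈ U

/-- Rows of a sequence tending to a point miss any neighborhood only finitely often. -/
theorem row_finite {G : Type*} [TopologicalSpace G] (g : ℕ → G) {x : G}
    (hg : Tendsto g atTop (nhds x)) {U : Set G} (hU : U ∈ nhds x) :
    {m | g m ∉ U}.Finite := by
  have h : g ⁻¹' U ∈ atTop := hg hU
  rw [← Nat.cofinite_eq_atTop, mem_cofinite] at h
  exact h

/-- Key refinement: from an infinite set witnessing weak set convergence of a double
sequence whose rows tend to `1`, one can extract an infinite subset witnessing the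
strong (tail) form of convergence. -/
theorem key_refine {G : Type*} [Group G] [TopologicalSpace G] [IsTopologicalGroup G]
    (g : ℕ → ℕ → G) (I : Set ℕ) (hI : I.Infinite)
    (hrow : ∀ n, Tendsto (g n) atTop (nhds (1 : G)))
    (hconv : SetConv {z | ∃ n ∈ I, ∃ m ∈ I, n < m ∧ z = g n m} (1 : G)) :
    ∃ I' : Set ℕ, I'.Infinite ∧ I' ⊆ I ∧
      ∀ U ∈ nhds (1 : G), ∃ k, ∀ n ∈ I', ∀ m ∈ I', k < n → n < m → g n m ∈ U := by
  classical
  set S : Set G := {z | ∃ n ∈ I, ∃ m ∈ I, n < m ∧ z = g n m} with hS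
  have hScnt : S.Countable := by
    have hsub : S ⊆ range (fun p : ℕ × ℕ => g p.1 p.2) := by
      rintro z ⟨n, _, m, _, _, rfl⟩
      exact ⟨(n, m), rfl⟩
    exact (countable_range _).mono hsub
  obtain ⟨e, he⟩ := (hScnt.insert 1).exists_eq_range (insert_nonempty _ _)
  have hstep : ∀ s : Finset ℕ, (∀ x ∈ s, x ∈ I) → ∃ q, q ∈ I ∧ ∀ p ∈ s,
      p < q ∧ ∀ r < p, (∃ V ∈ nhds (1 : G), e r ∉ V) → g p q ≠ e r := by
    intro s hs
    set E : Set ℕ := ⋃ p ∈ (s : Set ℕ), ⋃ r ∈ Iio p,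
      {q | (∃ V ∈ nhds (1 : G), e r ∉ V) ∧ g p q = e r} with hE
    have hEfin : E.Finite := by
      refine s.finite_toSet.biUnion fun p _ => (finite_Iio p).biUnion fun r _ => ?_
      by_cases hb : ∃ V ∈ nhds (1 : G), e r ∉ V
      · obtain ⟨V, hV, hne⟩ := hb
        refine (row_finite (g p) (hrow p) hV).subset ?_
        rintro q ⟨-, hq⟩
        simpa [hq] using hne
      · convert Set.finite_empty using 1
        ext q; simp only [mem_setOf_eq, mem_empty_iff_false, iff_false]
        rintro ⟨h1, -⟩; exact hb h1
    have hBfin : (E ∪ Iic (s.sup id)).Finite := hEfin.union (finite_Iic _)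
    obtain ⟨q, hqI, hqB⟩ := (hI.diff hBfin).nonempty
    refine ⟨q, hqI, ?_⟩
    intro p hp
    have hq1 : q ∉ E := fun h => hqB (Or.inl h)
    have hq2 : q ∉ Iic (s.sup id) := fun h => hqB (Or.inr h)
    constructor
    · have : p ≤ s.sup id := Finset.le_sup (f := id) hp
      exact lt_of_le_of_lt this (lt_of_not_ge (fun h => hq2 h))
    · intro r hr hbad hgr
      exact hq1 (mem_biUnion hp (mem_biUnion hr ⟨hbad, hgr⟩))
  obtain ⟨f, hfI, hfr⟩ := exists_seq_of_forall_finset_exists (fun n => n ∈ I)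
    (fun p q => p < q ∧ ∀ r < p, (∃ V ∈ nhds (1 : G), e r ∉ V) → g p q ≠ e r) hstep
  have hfmono : StrictMono f := fun p q h => (hfr p q h).1
  refine ⟨range f, infinite_range_of_injective hfmono.injective,
    range_subset_iff.2 hfI, ?_⟩
  intro U hU
  have hfin : (S \ U).Finite := hconv U hU
  have hidx : ∀ z ∈ S \ U, ∃ r, e r = z := by
    intro z hz
    have : z ∈ range e := he ▸ mem_insert_of_mem _ hz.1
    exact this
  set idx : G → ℕ := fun z => if h : ∃ r, e r = z then h.choose else 0 with hidxdef
  obtain ⟨k, hk⟩ := (hfin.image idx).bddAbove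
  refine ⟨k, ?_⟩
  rintro n ⟨s, rfl⟩ m ⟨t, rfl⟩ hkn hnm
  by_contra hnotU
  have hzS : g (f s) (f t) ∈ S := ⟨f s, hfI s, f t, hfI t, hnm, rfl⟩
  have hzSU : g (f s) (f t) ∈ S \ U := ⟨hzS, hnotU⟩
  have hex : ∃ r, e r = g (f s) (f t) := hidx _ hzSU
  have heq : e (idx (g (f s) (f t))) = g (f s) (f t) := by
    rw [hidxdef]; simp only [dif_pos hex]; exact hex.choose_spec
  have hle : idx (g (f s) (f t)) ≤ k := hk (mem_image_of_mem idx hzSU)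
  have hst : s < t := hfmono.lt_iff_lt.1 hnm
  have hbad : ∃ V ∈ nhds (1 : G), e (idx (g (f s) (f t))) ∉ V := by
    refine ⟨U, hU, fun hmem => hnotU ?_⟩
    rwa [heq] at hmem
  have hne := (hfr s t hst).2 (idx (g (f s) (f t)))
    (lt_of_le_of_lt hle hkn) hbad
  exact absurd heq.symm hne

/-- A topological group is Ramsey if and only if it is locally Ramsey at the identity. -/
theorem ramsey_iff_locally_ramsey_at_identity
    {G : Type*} [Group G] [TopologicalSpace G] [IsTopologicalGroup G] :
    RamseySpace G ↔
      ∀ g : ℕ → ℕ → G, (∀ n, Tendsto (g n) atTop (nhds (1 : G))) →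
        ∃ I : Set ℕ, I.Infinite ∧
          SetConv {z | ∃ n ∈ I, ∃ m ∈ I, n < m ∧ z = g n m} (1 : G) := by
  constructor
  · -- Ramsey → locally Ramsey at 1
    intro hR g hg
    obtain ⟨I, hIinf, hI⟩ := hR g (fun _ => (1 : G)) 1 hg tendsto_const_nhds
    refine ⟨I, hIinf, ?_⟩
    intro U hU
    obtain ⟨k, hk⟩ := hI U hU
    have hbig : ({z | ∃ n ∈ I, ∃ m ∈ I, n < m ∧ z = g n m} \ U) ⊆
        ⋃ n ∈ Iic k, (g n '' {m | g n m ∉ U}) := by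
      rintro z ⟨⟨n, hn, m, hm, hnm, rfl⟩, hzU⟩
      have hnk : n ≤ k := by
        by_contra hlt
        exact hzU (hk n hn m hm (lt_of_not_ge hlt) hnm)
      exact mem_biUnion hnk ⟨m, hzU, rfl⟩
    exact ((finite_Iic k).biUnion fun n _ =>
      (row_finite (g n) (hg n) hU).image (g n)).subset hbig
  · -- locally Ramsey at 1 → Ramsey
    intro h x y a hx hy
    set g : ℕ → ℕ → G := fun n m => (y n)⁻¹ * x n m with hg
    have hrow : ∀ n, Tendsto (g n) atTop (nhds (1 : G)) := by
      intro n
      have := (hx n).const_mul (y n)⁻¹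
      simpa using this
    obtain ⟨I, hIinf, hIconv⟩ := h g hrow
    obtain ⟨I', hI'inf, hI'sub, hkey⟩ := key_refine g I hIinf hrow hIconv
    refine ⟨I', hI'inf, ?_⟩
    intro U hU
    have hmul : Tendsto (fun p : G × G => p.1 * p.2) (nhds (a, 1)) (nhds a) := by
      have := continuous_mul.tendsto (a, (1 : G))
      simpa using this
    have hpre : (fun p : G × G => p.1 * p.2) ⁻¹' U ∈ nhds (a, (1 : G)) := hmul hU
    rw [mem_nhds_prod_iff] at hpre
    obtain ⟨W, hW, V, hV, hWV⟩ := hpre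
    obtain ⟨N, hN⟩ := (eventually_atTop.1 (hy hW : y ⁻¹' W ∈ atTop))
    obtain ⟨k₀, hk₀⟩ := hkey V hV
    refine ⟨max k₀ N, ?_⟩
    intro n hn m hm hkn hnm
    have hyW : y n ∈ W := hN n (le_of_lt (lt_of_le_of_lt (le_max_right _ _) hkn))
    have hgV : g n m ∈ V := hk₀ n hn m hm (lt_of_le_of_lt (le_max_left _ _) hkn) hnm
    have := hWV (Set.mk_mem_prod hyW hgV)
    simpa [hg, mul_inv_cancel_left] using this
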